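/- Let F be an infinite field and K an extension field of F. For a field E, let I_{E,r} denote the ideal of the polynomial ring E[x_α : α ∈ [n]^d] (one variable for each coordinate of a tensor in Ten_E(n,d)) consisting of all polynomials that vanish at every tensor over E of tensor rank at most r. Then I_{K,r} equals the K-linear span of I_{F,r} inside K[x_α] (equivalently, the extension of I_{F,r} along the inclusion F[x_α] ⊆ K[x_α]); in particular, any set of generators of the ideal I_{F,r} also generates the ideal I_{K,r}, so the equations for border rank over K are defined by polynomials with coefficients in F. -/

import Mathlib

open MvPolynomial

noncomputable def substMap (E : Type*) [Field E] (n d r : ℕ) :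
    (Fin d → Fin n) → MvPolynomial (Fin r × Fin d × Fin n) E :=
  fun f => ∑ t, ∏ j, X (t, j, f j)

lemma eval_substMap {E : Type*} [Field E] {n d r : ℕ}
    (w : Fin r × Fin d × Fin n → E) (P : MvPolynomial (Fin d → Fin n) E) :
    eval w (bind₁ (substMap E n d r) P)
      = eval (fun f => ∑ t, ∏ j, w (t, j, f j)) P := by
  rw [show (eval w : MvPolynomial (Fin r × Fin d × Fin n) E →+* E)
      = eval₂Hom (RingHom.id E) w from rfl, eval₂Hom_bind₁]
  simp [substMap]

/-- The ideal `I_{E,r}` of polynomials in the tensor coordinates (indexed by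
multi-indices `[n]^d`) that vanish at every tensor over `E` of tensor rank at most `r`;
a tensor of rank at most `r` is a sum of `r` simple tensors, whose coordinate at the
multi-index `f` is `∑_t ∏_j v_t j (f j)`. -/
def vanishingIdealOfRank (E : Type*) [Field E] (n d r : ℕ) :
    Ideal (MvPolynomial (Fin d → Fin n) E) where
  carrier := {P | ∀ v : Fin r → Fin d → Fin n → E,
    MvPolynomial.eval (fun f => ∑ t, ∏ j, v t j (f j)) P = 0}
  add_mem' := by
    intro a b ha hb v
    simp [ha v, hb v]
  zero_mem' := by
    intro v
    simp
  smul_mem' := by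
    intro c a ha v
    simp [smul_eq_mul, ha v]

lemma mem_vanishing_iff {E : Type*} [Field E] [Infinite E] {n d r : ℕ}
    (P : MvPolynomial (Fin d → Fin n) E) :
    P ∈ vanishingIdealOfRank E n d r ↔ bind₁ (substMap E n d r) P = 0 := by
  constructor
  · intro h
    apply MvPolynomial.funext (fun w => ?_)
    rw [map_zero, eval_substMap]
    exact h (fun t j k => w (t, j, k))
  · intro h v
    have := congrArg (eval (fun p : Fin r × Fin d × Fin n => v p.1 p.2.1 p.2.2)) h
    rw [eval_substMap, map_zero] at this
    exact this

lemma map_substMap {F K : Type*} [Field F] [Field K] (φ : F →+* K) {n d r : ℕ}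
    (f : Fin d → Fin n) :
    MvPolynomial.map φ (substMap F n d r f) = substMap K n d r f := by
  simp [substMap, map_sum, map_prod]

/-- Proposition `field.ind`: the equations for border rank are defined over the base
field: for an infinite field `F` and an extension field `K` of `F`, the ideal `I_{K,r}`
is the extension (the `K`-linear span) of `I_{F,r}` along `F[x_α] ⊆ K[x_α]`. -/
theorem vanishing_ideal_of_rank_base_change
    (F : Type*) [Field F] [Infinite F]
    (K : Type*) [Field K] [Algebra F K]
    (n d r : ℕ) :
    Ideal.map (MvPolynomial.map (algebraMap F K)) (vanishingIdealOfRank F n d r)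
      = vanishingIdealOfRank K n d r := by
  classical
  have hinj : Function.Injective (algebraMap F K) := (algebraMap F K).injective
  have : Infinite K := Infinite.of_injective _ hinj
  set φ := algebraMap F K
  have hsub : (fun f => MvPolynomial.map φ (substMap F n d r f)) = substMap K n d r :=
    funext fun f => map_substMap φ f
  apply le_antisymm
  · rw [Ideal.map_le_iff_le_comap]
    intro P hP
    have h0 : bind₁ (substMap F n d r) P = 0 := (mem_vanishing_iff P).mp hP
    have : bind₁ (substMap K n d r) (MvPolynomial.map φ P) = 0 := by
      rw [← hsub, ← map_bind₁, h0, map_zero]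
    exact Ideal.mem_comap.mpr ((mem_vanishing_iff _).mpr this)
  · intro P hP
    have h0 : bind₁ (substMap K n d r) P = 0 := (mem_vanishing_iff P).mp hP
    set B := Module.Basis.ofVectorSpace F K
    set S : Finset _ := P.support.biUnion (fun m => (B.repr (coeff m P)).support) with hS
    set Q : _ → MvPolynomial (Fin d → Fin n) F :=
      fun i => ∑ m ∈ P.support, monomial m (B.repr (coeff m P) i) with hQ
    have hcoeffQ : ∀ i m, coeff m (Q i) = B.repr (coeff m P) i := by
      intro i m
      by_cases hm : m ∈ P.support
      · simp [hQ, coeff_sum, coeff_monomial, Finset.sum_ite_eq', hm]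
      · simp [hQ, coeff_sum, coeff_monomial, Finset.sum_ite_eq', hm,
          notMem_support_iff.mp hm]
    have hdecomp : P = ∑ i ∈ S, C (B i) * MvPolynomial.map φ (Q i) := by
      apply MvPolynomial.ext
      intro m
      rw [coeff_sum]
      simp only [coeff_C_mul, coeff_map, hcoeffQ]
      have : ∀ i ∈ S, B i * φ (B.repr (coeff m P) i) = (B.repr (coeff m P) i) • B i := by
        intro i _
        rw [Algebra.smul_def, mul_comm]
      rw [Finset.sum_congr rfl this]
      by_cases hm : m ∈ P.support
      · have hss : (B.repr (coeff m P)).support ⊆ S := by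
          intro j hj
          rw [hS]
          exact Finset.mem_biUnion.mpr ⟨m, hm, hj⟩
        rw [← Finsupp.sum_of_support_subset _ hss
            (fun i a => a • B i) (fun i _ => zero_smul F (B i))]
        exact (B.linearCombination_repr (coeff m P)).symm
      · rw [notMem_support_iff.mp hm]
        simp
    -- each Q i lies in the F-ideal
    have hQmem : ∀ i ∈ S, Q i ∈ vanishingIdealOfRank F n d r := by
      intro i hi
      rw [mem_vanishing_iff]
      apply MvPolynomial.ext
      intro m
      rw [coeff_zero]
      -- from h0 and decomposition
      have h1 : bind₁ (substMap K n d r) P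
          = ∑ j ∈ S, C (B j) * MvPolynomial.map φ (bind₁ (substMap F n d r) (Q j)) := by
        rw [hdecomp, map_sum]
        refine Finset.sum_congr rfl fun j _ => ?_
        rw [map_mul, bind₁_C_right, map_bind₁, hsub]
      have h2 := congrArg (coeff m) (h1 ▸ h0)
      rw [coeff_zero, coeff_sum] at h2
      simp only [coeff_C_mul, coeff_map] at h2
      have h3 : ∑ j ∈ S, (coeff m (bind₁ (substMap F n d r) (Q j))) • B j = 0 := by
        rw [← h2]
        apply Finset.sum_congr rfl
        intro j _
        rw [Algebra.smul_def, mul_comm]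
      exact linearIndependent_iff'.mp B.linearIndependent S _ h3 i hi
    rw [hdecomp]
    apply Ideal.sum_mem
    intro i hi
    exact Ideal.mul_mem_left _ _ (Ideal.mem_map_of_mem _ (hQmem i hi))
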